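/- Let ρ_AB be a density matrix on ℂ^m⊗ℂ^n and ρ_CD a density matrix on ℂ^u⊗ℂ^v, and let U_A, U_B, U_C, U_D be unitary matrices on ℂ^m, ℂ^n, ℂ^u, ℂ^v respectively. Set ρ'_AB = (U_A⊗U_B) ρ_AB (U_A⊗U_B)† and ρ'_CD = (U_C⊗U_D) ρ_CD (U_C⊗U_D)†. Then N_H^b(ρ'_AB⊗ρ'_CD) = N_H^b(ρ_AB⊗ρ_CD). -/

import Mathlib

open scoped Matrix Kronecker BigOperators ComplexOrder
open Matrix

/-- The positive-semidefinite square root of a PSD matrix (0 if not PSD). -/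
noncomputable def psdSqrt {N : Type*} [Fintype N] [DecidableEq N] (A : Matrix N N ℂ) :
    Matrix N N ℂ :=
  open scoped Classical in
  if h : A.PosSemidef then
    (h.1.eigenvectorUnitary : Matrix N N ℂ) *
      Matrix.diagonal ((↑) ∘ Real.sqrt ∘ h.1.eigenvalues) *
        (star h.1.eigenvectorUnitary : Matrix N N ℂ)
  else 0

/-- Squared Frobenius (Hilbert–Schmidt) norm: `‖X‖² = tr (Xᴴ X)`. -/
noncomputable def hsNormSq {N : Type*} [Fintype N] (X : Matrix N N ℂ) : ℝ :=
  (Matrix.trace (Xᴴ * X)).re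

/-- A density matrix: positive semidefinite with unit trace. -/
def IsDensity {N : Type*} [Fintype N] [DecidableEq N] (ρ : Matrix N N ℂ) : Prop :=
  ρ.PosSemidef ∧ ρ.trace = 1

/-- Standard inner product on `ℂ^N`. -/
noncomputable def cInner {N : Type*} [Fintype N] (x y : N → ℂ) : ℂ :=
  ∑ i, star (x i) * y i

/-- Outer product `ψ ψ†`. -/
noncomputable def outer {N : Type*} (ψ : N → ℂ) : Matrix N N ℂ :=
  Matrix.vecMulVec ψ (star ψ)

/-- The family of unit vectors of a rank-one von Neumann measurement: an orthonormal basis,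
indexed by the dimension. -/
def IsVNM {N : Type*} [Fintype N] [DecidableEq N] (u : N → N → ℂ) : Prop :=
  ∀ a b, cInner (u a) (u b) = if a = b then (1 : ℂ) else 0

/-- The rank-one projection `Π_h = u_h u_h†` of a measurement. -/
noncomputable def projOf {N : Type*} (u : N → N → ℂ) (h : N) : Matrix N N ℂ :=
  outer (u h)

/-- The measurement `{u_h u_h†}` fixes `σ`: `Σ_h Π_h σ Π_h = σ`. -/
def FixesVNM {N : Type*} [Fintype N] (u : N → N → ℂ) (σ : Matrix N N ℂ) : Prop :=
  ∑ h, projOf u h * σ * projOf u h = σ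

/-- Reduced state of the second factor: `(ρ_B)_{j j'} = Σ_i ρ_{(i,j),(i,j')}`. -/
noncomputable def redB {m n : ℕ} (ρ : Matrix (Fin m × Fin n) (Fin m × Fin n) ℂ) :
    Matrix (Fin n) (Fin n) ℂ :=
  Matrix.of fun j j' => ∑ i, ρ (i, j) (i, j')

/-- Reduced state of the first factor: `(ρ_C)_{k k'} = Σ_l ρ_{(k,l),(k',l)}`. -/
noncomputable def redC {u v : ℕ} (ρ : Matrix (Fin u × Fin v) (Fin u × Fin v) ℂ) :
    Matrix (Fin u) (Fin u) ℂ :=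
  Matrix.of fun k k' => ∑ l, ρ (k, l) (k', l)

/-- `I_m ⊗ P ⊗ I_v` acting on the middle two factors. -/
noncomputable def ampMid (m v : ℕ) {n u : ℕ} (P : Matrix (Fin n × Fin u) (Fin n × Fin u) ℂ) :
    Matrix ((Fin m × Fin n) × Fin u × Fin v) ((Fin m × Fin n) × Fin u × Fin v) ℂ :=
  Matrix.of fun p q =>
    (if p.1.1 = q.1.1 then (1 : ℂ) else 0) * P (p.1.2, p.2.1) (q.1.2, q.2.1) *
      (if p.2.2 = q.2.2 then (1 : ℂ) else 0)

/-- The map `Π^{BC}(X) = Σ_h (I_m ⊗ Π_h ⊗ I_v) X (I_m ⊗ Π_h ⊗ I_v)`. -/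
noncomputable def pinchBC {m n u v : ℕ} (w : (Fin n × Fin u) → (Fin n × Fin u) → ℂ)
    (X : Matrix ((Fin m × Fin n) × Fin u × Fin v) ((Fin m × Fin n) × Fin u × Fin v) ℂ) :
    Matrix ((Fin m × Fin n) × Fin u × Fin v) ((Fin m × Fin n) × Fin u × Fin v) ℂ :=
  ∑ h, ampMid m v (projOf w h) * X * ampMid m v (projOf w h)

/-- The measurement-induced nonbilocality `N_H^b(ρ_AB ⊗ ρ_CD)`. -/
noncomputable def NHb {m n u v : ℕ}
    (ρAB : Matrix (Fin m × Fin n) (Fin m × Fin n) ℂ)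
    (ρCD : Matrix (Fin u × Fin v) (Fin u × Fin v) ℂ) : ℝ :=
  sSup { r : ℝ | ∃ w : (Fin n × Fin u) → (Fin n × Fin u) → ℂ,
    IsVNM w ∧ FixesVNM w (redB ρAB ⊗ₖ redC ρCD) ∧
    r = hsNormSq (psdSqrt (ρAB ⊗ₖ ρCD) - pinchBC w (psdSqrt (ρAB ⊗ₖ ρCD))) }

-- generic helpers
section Generic
variable {N : Type*} [Fintype N] [DecidableEq N]

lemma kron_conjT {a b : Type*} (A : Matrix a a ℂ) (B : Matrix b b ℂ) :
    (A ⊗ₖ B)ᴴ = Aᴴ ⊗ₖ Bᴴ := by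
  ext ⟨i, j⟩ ⟨k, l⟩
  simp [Matrix.conjTranspose_apply, Matrix.kroneckerMap_apply, star_mul']

lemma psdSqrt_conj (A U : Matrix N N ℂ) (hU : U * Uᴴ = 1) (hU' : Uᴴ * U = 1) :
    psdSqrt (U * A * Uᴴ) = U * psdSqrt A * Uᴴ := by
  by_cases hA : A.PosSemidef
  · have hA' : (U * A * Uᴴ).PosSemidef := hA.mul_mul_conjTranspose_same U
    have hUmem : U ∈ unitary (Matrix N N ℂ) := Unitary.mem_iff.mpr ⟨hU', hU⟩
    have e : ∀ (B : Matrix N N ℂ) (hB : B.PosSemidef), psdSqrt B = cfc Real.sqrt B :=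
      fun B hB => by rw [psdSqrt, dif_pos hB, hB.1.cfc_eq]; rfl
    rw [e _ hA', e _ hA]
    have hcont : Continuous (Unitary.conjStarAlgAut ℂ (Matrix N N ℂ) ⟨U, hUmem⟩) := by
      have : Continuous fun X : Matrix N N ℂ => U * X * Uᴴ :=
        (continuous_const.matrix_mul continuous_id).matrix_mul continuous_const
      exact this
    have := StarAlgHomClass.map_cfc (S := ℂ) (Unitary.conjStarAlgAut ℂ (Matrix N N ℂ) ⟨U, hUmem⟩)
      Real.sqrt A (hφ := hcont) (ha := hA.1) (hφa := hA'.1)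
    exact this.symm
  · have hA' : ¬ (U * A * Uᴴ).PosSemidef := by
      intro h
      have := h.mul_mul_conjTranspose_same Uᴴ
      rw [show Uᴴ * (U * A * Uᴴ) * Uᴴᴴ = Uᴴ * U * (A * (Uᴴ * U)) by
        rw [Matrix.conjTranspose_conjTranspose]; simp only [mul_assoc], hU', one_mul, mul_one] at this
      exact hA this
    rw [psdSqrt, dif_neg hA', psdSqrt, dif_neg hA, Matrix.mul_zero, Matrix.zero_mul]

lemma hsNormSq_conj (X U : Matrix N N ℂ) (hU' : Uᴴ * U = 1) :
    hsNormSq (U * X * Uᴴ) = hsNormSq X := by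
  unfold hsNormSq
  congr 1
  rw [Matrix.conjTranspose_mul, Matrix.conjTranspose_mul, Matrix.conjTranspose_conjTranspose,
    mul_assoc, Matrix.trace_mul_comm]
  rw [show Xᴴ * Uᴴ * (U * X * Uᴴ) * U = Xᴴ * (Uᴴ * U * (X * (Uᴴ * U))) from by
    simp only [mul_assoc], hU']
  simp

lemma outer_mulVec (V : Matrix N N ℂ) (x : N → ℂ) :
    outer (V *ᵥ x) = V * outer x * Vᴴ := by
  ext p q
  simp only [outer, Matrix.vecMulVec_apply, Matrix.mul_apply, Matrix.mulVec, dotProduct,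
    Matrix.conjTranspose_apply, Pi.star_apply, Finset.sum_mul, Finset.mul_sum, star_sum,
    star_mul']
  refine Finset.sum_congr rfl fun a _ => Finset.sum_congr rfl fun b _ => ?_
  ring

lemma cInner_mulVec (V : Matrix N N ℂ) (hV' : Vᴴ * V = 1) (x y : N → ℂ) :
    cInner (V *ᵥ x) (V *ᵥ y) = cInner x y := by
  have : cInner (V *ᵥ x) (V *ᵥ y) = star (V *ᵥ x) ⬝ᵥ (V *ᵥ y) := rfl
  rw [this, Matrix.star_mulVec, ← Matrix.dotProduct_mulVec, Matrix.mulVec_mulVec, hV',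
    Matrix.one_mulVec]
  rfl

end Generic
section Amp
variable {m n u v : ℕ}

noncomputable def amp4 (m v : ℕ) {n u : ℕ} (A : Matrix (Fin m) (Fin m) ℂ)
    (P : Matrix (Fin n × Fin u) (Fin n × Fin u) ℂ) (D : Matrix (Fin v) (Fin v) ℂ) :
    Matrix ((Fin m × Fin n) × Fin u × Fin v) ((Fin m × Fin n) × Fin u × Fin v) ℂ :=
  Matrix.of fun p q => A p.1.1 q.1.1 * P (p.1.2, p.2.1) (q.1.2, q.2.1) * D p.2.2 q.2.2

lemma ampMid_eq_amp4 (P : Matrix (Fin n × Fin u) (Fin n × Fin u) ℂ) :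
    ampMid m v P = amp4 m v 1 P 1 := by
  ext p q
  simp [ampMid, amp4, Matrix.one_apply]

lemma amp4_mul (A A' : Matrix (Fin m) (Fin m) ℂ)
    (P P' : Matrix (Fin n × Fin u) (Fin n × Fin u) ℂ) (D D' : Matrix (Fin v) (Fin v) ℂ) :
    amp4 m v A P D * amp4 m v A' P' D' = amp4 m v (A * A') (P * P') (D * D') := by
  ext p q
  simp only [amp4, Matrix.mul_apply, Matrix.of_apply, Fintype.sum_prod_type, Finset.sum_mul,
    Finset.mul_sum]
  conv_rhs =>
    rw [Finset.sum_comm]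
    enter [2, b]
    rw [Finset.sum_comm]
    enter [2, c]
    rw [Finset.sum_comm]
  conv_rhs =>
    enter [2, b]
    rw [Finset.sum_comm]
  conv_rhs =>
    rw [Finset.sum_comm]
  refine Finset.sum_congr rfl fun a _ => Finset.sum_congr rfl fun b _ =>
    Finset.sum_congr rfl fun c _ => Finset.sum_congr rfl fun d _ => ?_
  ring

lemma amp4_one : amp4 m v (1 : Matrix (Fin m) (Fin m) ℂ)
    (1 : Matrix (Fin n × Fin u) (Fin n × Fin u) ℂ) (1 : Matrix (Fin v) (Fin v) ℂ) = 1 := by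
  ext p q
  simp only [amp4, Matrix.of_apply, Matrix.one_apply, Prod.ext_iff]
  by_cases h1 : p.1.1 = q.1.1 <;> by_cases h2 : p.1.2 = q.1.2 <;>
    by_cases h3 : p.2.1 = q.2.1 <;> by_cases h4 : p.2.2 = q.2.2 <;>
    simp [h1, h2, h3, h4, Prod.ext_iff]

lemma amp4_conjT (A : Matrix (Fin m) (Fin m) ℂ)
    (P : Matrix (Fin n × Fin u) (Fin n × Fin u) ℂ) (D : Matrix (Fin v) (Fin v) ℂ) :
    (amp4 m v A P D)ᴴ = amp4 m v Aᴴ Pᴴ Dᴴ := by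
  ext p q
  simp only [amp4, Matrix.conjTranspose_apply, Matrix.of_apply, star_mul']

lemma kron4_eq_amp4 (A : Matrix (Fin m) (Fin m) ℂ) (B : Matrix (Fin n) (Fin n) ℂ)
    (C : Matrix (Fin u) (Fin u) ℂ) (D : Matrix (Fin v) (Fin v) ℂ) :
    (A ⊗ₖ B) ⊗ₖ (C ⊗ₖ D) = amp4 m v A (B ⊗ₖ C) D := by
  ext ⟨⟨i, j⟩, k, l⟩ ⟨⟨i', j'⟩, k', l'⟩
  simp only [Matrix.kroneckerMap_apply, amp4, Matrix.of_apply]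
  ring

end Amp
lemma redB_conj {m n : ℕ} (ρ : Matrix (Fin m × Fin n) (Fin m × Fin n) ℂ)
    (UA : Matrix (Fin m) (Fin m) ℂ) (UB : Matrix (Fin n) (Fin n) ℂ)
    (hUA' : UAᴴ * UA = 1) :
    redB ((UA ⊗ₖ UB) * ρ * (UA ⊗ₖ UB)ᴴ) = UB * redB ρ * UBᴴ := by
  have key : ∀ a a' : Fin m, (∑ i, UA i a * star (UA i a')) = if a' = a then (1:ℂ) else 0 := by
    intro a a'
    have h := congrFun (congrFun hUA' a') a
    simp only [Matrix.mul_apply, Matrix.conjTranspose_apply, Matrix.one_apply] at h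
    rw [← h]
    exact Finset.sum_congr rfl fun i _ => by ring
  ext j j'
  simp only [redB, Matrix.of_apply, Matrix.mul_apply, Matrix.conjTranspose_apply,
    Matrix.kroneckerMap_apply, Finset.sum_mul, Finset.mul_sum, star_mul']
  rw [Finset.sum_comm]
  conv_lhs =>
    enter [2, y]
    rw [Finset.sum_comm]
  conv_lhs =>
    enter [2, y, 2, x]
    rw [show (∑ t, UA t x.1 * UB j x.2 * ρ x y * (star (UA t y.1) * star (UB j' y.2)))
        = (∑ t, UA t x.1 * star (UA t y.1)) * (UB j x.2 * ρ x y * star (UB j' y.2)) from by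
      rw [Finset.sum_mul]; exact Finset.sum_congr rfl fun t _ => by ring,
      key x.1 y.1]
  simp only [Fintype.sum_prod_type, ite_mul, one_mul, zero_mul]
  conv_lhs =>
    enter [2, a', 2, b']
    rw [Finset.sum_comm]
  simp only [Finset.sum_ite_eq, Finset.mem_univ, if_true]
  conv_lhs =>
    rw [Finset.sum_comm]
    enter [2, b']
    rw [Finset.sum_comm]
lemma redC_conj {u v : ℕ} (ρ : Matrix (Fin u × Fin v) (Fin u × Fin v) ℂ)
    (UC : Matrix (Fin u) (Fin u) ℂ) (UD : Matrix (Fin v) (Fin v) ℂ)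
    (hUD' : UDᴴ * UD = 1) :
    redC ((UC ⊗ₖ UD) * ρ * (UC ⊗ₖ UD)ᴴ) = UC * redC ρ * UCᴴ := by
  have key : ∀ a a' : Fin v, (∑ i, UD i a * star (UD i a')) = if a' = a then (1:ℂ) else 0 := by
    intro a a'
    have h := congrFun (congrFun hUD' a') a
    simp only [Matrix.mul_apply, Matrix.conjTranspose_apply, Matrix.one_apply] at h
    rw [← h]
    exact Finset.sum_congr rfl fun i _ => by ring
  ext k k'
  simp only [redC, Matrix.of_apply, Matrix.mul_apply, Matrix.conjTranspose_apply,
    Matrix.kroneckerMap_apply, Finset.sum_mul, Finset.mul_sum, star_mul']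
  rw [Finset.sum_comm]
  conv_lhs =>
    enter [2, y]
    rw [Finset.sum_comm]
  conv_lhs =>
    enter [2, y, 2, x]
    rw [show (∑ t, UC k x.1 * UD t x.2 * ρ x y * (star (UC k' y.1) * star (UD t y.2)))
        = (∑ t, UD t x.2 * star (UD t y.2)) * (UC k x.1 * ρ x y * star (UC k' y.1)) from by
      rw [Finset.sum_mul]; exact Finset.sum_congr rfl fun t _ => by ring,
      key x.2 y.2]
  simp only [Fintype.sum_prod_type, ite_mul, one_mul, zero_mul]
  simp only [Finset.sum_ite_eq, Finset.mem_univ, if_true]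
  conv_lhs =>
    enter [2, c']
    rw [Finset.sum_comm]
lemma kron_unitary {a b : Type*} [Fintype a] [Fintype b] [DecidableEq a] [DecidableEq b]
    (A : Matrix a a ℂ) (B : Matrix b b ℂ) (hA : A * Aᴴ = 1) (hB : B * Bᴴ = 1) :
    (A ⊗ₖ B) * (A ⊗ₖ B)ᴴ = 1 := by
  rw [kron_conjT, ← Matrix.mul_kronecker_mul, hA, hB, Matrix.one_kronecker_one]

lemma kron_unitary' {a b : Type*} [Fintype a] [Fintype b] [DecidableEq a] [DecidableEq b]
    (A : Matrix a a ℂ) (B : Matrix b b ℂ) (hA : Aᴴ * A = 1) (hB : Bᴴ * B = 1) :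
    (A ⊗ₖ B)ᴴ * (A ⊗ₖ B) = 1 := by
  rw [kron_conjT, ← Matrix.mul_kronecker_mul, hA, hB, Matrix.one_kronecker_one]

noncomputable def NHbSet {m n u v : ℕ}
    (ρAB : Matrix (Fin m × Fin n) (Fin m × Fin n) ℂ)
    (ρCD : Matrix (Fin u × Fin v) (Fin u × Fin v) ℂ) : Set ℝ :=
  { r : ℝ | ∃ w : (Fin n × Fin u) → (Fin n × Fin u) → ℂ,
    IsVNM w ∧ FixesVNM w (redB ρAB ⊗ₖ redC ρCD) ∧
    r = hsNormSq (psdSqrt (ρAB ⊗ₖ ρCD) - pinchBC w (psdSqrt (ρAB ⊗ₖ ρCD))) }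

lemma NHbSet_subset {m n u v : ℕ}
    (ρAB : Matrix (Fin m × Fin n) (Fin m × Fin n) ℂ)
    (ρCD : Matrix (Fin u × Fin v) (Fin u × Fin v) ℂ)
    (UA : Matrix (Fin m) (Fin m) ℂ) (UB : Matrix (Fin n) (Fin n) ℂ)
    (UC : Matrix (Fin u) (Fin u) ℂ) (UD : Matrix (Fin v) (Fin v) ℂ)
    (hUA : UA * UAᴴ = 1) (hUA' : UAᴴ * UA = 1)
    (hUB : UB * UBᴴ = 1) (hUB' : UBᴴ * UB = 1)
    (hUC : UC * UCᴴ = 1) (hUC' : UCᴴ * UC = 1)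
    (hUD : UD * UDᴴ = 1) (hUD' : UDᴴ * UD = 1) :
    NHbSet ((UA ⊗ₖ UB) * ρAB * (UA ⊗ₖ UB)ᴴ) ((UC ⊗ₖ UD) * ρCD * (UC ⊗ₖ UD)ᴴ) ⊆
      NHbSet ρAB ρCD := by
  set V : Matrix (Fin n × Fin u) (Fin n × Fin u) ℂ := UB ⊗ₖ UC with hVdef
  have hV : V * Vᴴ = 1 := kron_unitary UB UC hUB hUC
  have hV' : Vᴴ * V = 1 := kron_unitary' UB UC hUB' hUC'
  set W : Matrix ((Fin m × Fin n) × Fin u × Fin v) ((Fin m × Fin n) × Fin u × Fin v) ℂ :=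
    (UA ⊗ₖ UB) ⊗ₖ (UC ⊗ₖ UD) with hWdef
  have hW : W * Wᴴ = 1 :=
    kron_unitary _ _ (kron_unitary UA UB hUA hUB) (kron_unitary UC UD hUC hUD)
  have hW' : Wᴴ * W = 1 :=
    kron_unitary' _ _ (kron_unitary' UA UB hUA' hUB') (kron_unitary' UC UD hUC' hUD')
  rintro r ⟨w', hVNM', hFix', rfl⟩
  set w : (Fin n × Fin u) → (Fin n × Fin u) → ℂ := fun h => Vᴴ *ᵥ w' h with hwdef
  have hVNM : IsVNM w := by
    intro a b
    rw [← hVNM' a b]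
    exact cInner_mulVec Vᴴ (by rw [Matrix.conjTranspose_conjTranspose, hV]) _ _
  have hproj2 : ∀ h, projOf w h = Vᴴ * projOf w' h * V := by
    intro h
    show outer (Vᴴ *ᵥ w' h) = _
    rw [outer_mulVec, Matrix.conjTranspose_conjTranspose]
    rfl
  have hproj : ∀ h, projOf w' h = V * projOf w h * Vᴴ := by
    intro h
    rw [hproj2 h]
    symm
    calc V * (Vᴴ * projOf w' h * V) * Vᴴ
        = (V * Vᴴ) * (projOf w' h * (V * Vᴴ)) := by simp only [mul_assoc]
      _ = projOf w' h := by rw [hV]; simp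
  set σ : Matrix (Fin n × Fin u) (Fin n × Fin u) ℂ := redB ρAB ⊗ₖ redC ρCD with hσdef
  have hσ' : redB ((UA ⊗ₖ UB) * ρAB * (UA ⊗ₖ UB)ᴴ) ⊗ₖ
      redC ((UC ⊗ₖ UD) * ρCD * (UC ⊗ₖ UD)ᴴ) = V * σ * Vᴴ := by
    rw [redB_conj ρAB UA UB hUA', redC_conj ρCD UC UD hUD', Matrix.mul_kronecker_mul,
      Matrix.mul_kronecker_mul, ← kron_conjT]
  have hFix : FixesVNM w σ := by
    unfold FixesVNM at hFix' ⊢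
    rw [hσ'] at hFix'
    calc ∑ h, projOf w h * σ * projOf w h
        = ∑ h, Vᴴ * (projOf w' h * (V * σ * Vᴴ) * projOf w' h) * V := by
          refine Finset.sum_congr rfl fun h _ => ?_
          rw [hproj2 h]
          simp only [mul_assoc]
      _ = Vᴴ * (∑ h, projOf w' h * (V * σ * Vᴴ) * projOf w' h) * V := by
          rw [Finset.mul_sum, Finset.sum_mul]
      _ = Vᴴ * (V * σ * Vᴴ) * V := by rw [hFix']
      _ = (Vᴴ * V) * (σ * (Vᴴ * V)) := by simp only [mul_assoc]
      _ = σ := by rw [hV']; simp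
  have hamp : ∀ h, ampMid m v (projOf w' h) = W * ampMid m v (projOf w h) * Wᴴ := by
    intro h
    rw [hproj h, ampMid_eq_amp4, ampMid_eq_amp4, hWdef, hVdef, kron4_eq_amp4, amp4_conjT,
      amp4_mul, amp4_mul, mul_one, mul_one, hUA, hUD]
  set S := psdSqrt (ρAB ⊗ₖ ρCD) with hSdef
  have h1 : ((UA ⊗ₖ UB) * ρAB * (UA ⊗ₖ UB)ᴴ) ⊗ₖ ((UC ⊗ₖ UD) * ρCD * (UC ⊗ₖ UD)ᴴ) =
      W * (ρAB ⊗ₖ ρCD) * Wᴴ := by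
    rw [Matrix.mul_kronecker_mul, Matrix.mul_kronecker_mul, ← kron_conjT]
  have h2 : psdSqrt (((UA ⊗ₖ UB) * ρAB * (UA ⊗ₖ UB)ᴴ) ⊗ₖ
      ((UC ⊗ₖ UD) * ρCD * (UC ⊗ₖ UD)ᴴ)) = W * S * Wᴴ := by
    rw [h1, psdSqrt_conj _ W hW hW']
  have hpinch : pinchBC w' (W * S * Wᴴ) = W * pinchBC w S * Wᴴ := by
    unfold pinchBC
    calc ∑ h, ampMid m v (projOf w' h) * (W * S * Wᴴ) * ampMid m v (projOf w' h)
        = ∑ h, W * (ampMid m v (projOf w h) * S * ampMid m v (projOf w h)) * Wᴴ := by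
          refine Finset.sum_congr rfl fun h _ => ?_
          rw [hamp h]
          rw [show W * ampMid m v (projOf w h) * Wᴴ * (W * S * Wᴴ) *
              (W * ampMid m v (projOf w h) * Wᴴ) =
              W * (ampMid m v (projOf w h) * ((Wᴴ * W) *
                (S * ((Wᴴ * W) * (ampMid m v (projOf w h) * Wᴴ))))) from by
            simp only [mul_assoc], hW']
          simp only [one_mul, mul_assoc]
      _ = W * (∑ h, ampMid m v (projOf w h) * S * ampMid m v (projOf w h)) * Wᴴ := by
          rw [Finset.mul_sum, Finset.sum_mul]
  refine ⟨w, hVNM, hFix, ?_⟩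
  rw [h2, hpinch, ← Matrix.sub_mul, ← Matrix.mul_sub, hsNormSq_conj _ W hW']

/-- Local unitary invariance of the nonbilocality quantifier. -/
theorem stmt6 {m n u v : ℕ}
    (ρAB : Matrix (Fin m × Fin n) (Fin m × Fin n) ℂ)
    (ρCD : Matrix (Fin u × Fin v) (Fin u × Fin v) ℂ)
    (hAB : IsDensity ρAB) (hCD : IsDensity ρCD)
    (UA : Matrix (Fin m) (Fin m) ℂ) (UB : Matrix (Fin n) (Fin n) ℂ)
    (UC : Matrix (Fin u) (Fin u) ℂ) (UD : Matrix (Fin v) (Fin v) ℂ)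
    (hUA : UA * UAᴴ = 1) (hUA' : UAᴴ * UA = 1)
    (hUB : UB * UBᴴ = 1) (hUB' : UBᴴ * UB = 1)
    (hUC : UC * UCᴴ = 1) (hUC' : UCᴴ * UC = 1)
    (hUD : UD * UDᴴ = 1) (hUD' : UDᴴ * UD = 1) :
    NHb ((UA ⊗ₖ UB) * ρAB * (UA ⊗ₖ UB)ᴴ) ((UC ⊗ₖ UD) * ρCD * (UC ⊗ₖ UD)ᴴ) =
      NHb ρAB ρCD := by
  have e1 : NHbSet ((UA ⊗ₖ UB) * ρAB * (UA ⊗ₖ UB)ᴴ) ((UC ⊗ₖ UD) * ρCD * (UC ⊗ₖ UD)ᴴ) =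
      NHbSet ρAB ρCD := by
    apply Set.Subset.antisymm
    · exact NHbSet_subset ρAB ρCD UA UB UC UD hUA hUA' hUB hUB' hUC hUC' hUD hUD'
    · have h := NHbSet_subset ((UA ⊗ₖ UB) * ρAB * (UA ⊗ₖ UB)ᴴ)
        ((UC ⊗ₖ UD) * ρCD * (UC ⊗ₖ UD)ᴴ) UAᴴ UBᴴ UCᴴ UDᴴ
        (by simpa using hUA') (by simpa using hUA) (by simpa using hUB')
        (by simpa using hUB) (by simpa using hUC') (by simpa using hUC)
        (by simpa using hUD') (by simpa using hUD)
      have eA : (UAᴴ ⊗ₖ UBᴴ) * ((UA ⊗ₖ UB) * ρAB * (UA ⊗ₖ UB)ᴴ) * (UAᴴ ⊗ₖ UBᴴ)ᴴ = ρAB := by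
        rw [← kron_conjT]
        have hK' : (UA ⊗ₖ UB)ᴴ * (UA ⊗ₖ UB) = 1 := kron_unitary' UA UB hUA' hUB'
        calc (UA ⊗ₖ UB)ᴴ * ((UA ⊗ₖ UB) * ρAB * (UA ⊗ₖ UB)ᴴ) * (UA ⊗ₖ UB)ᴴᴴ
            = ((UA ⊗ₖ UB)ᴴ * (UA ⊗ₖ UB)) * (ρAB * ((UA ⊗ₖ UB)ᴴ * (UA ⊗ₖ UB))) := by
              rw [Matrix.conjTranspose_conjTranspose]; simp only [mul_assoc]
          _ = ρAB := by rw [hK']; simp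
      have eC : (UCᴴ ⊗ₖ UDᴴ) * ((UC ⊗ₖ UD) * ρCD * (UC ⊗ₖ UD)ᴴ) * (UCᴴ ⊗ₖ UDᴴ)ᴴ = ρCD := by
        rw [← kron_conjT]
        have hK' : (UC ⊗ₖ UD)ᴴ * (UC ⊗ₖ UD) = 1 := kron_unitary' UC UD hUC' hUD'
        calc (UC ⊗ₖ UD)ᴴ * ((UC ⊗ₖ UD) * ρCD * (UC ⊗ₖ UD)ᴴ) * (UC ⊗ₖ UD)ᴴᴴ
            = ((UC ⊗ₖ UD)ᴴ * (UC ⊗ₖ UD)) * (ρCD * ((UC ⊗ₖ UD)ᴴ * (UC ⊗ₖ UD))) := by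
              rw [Matrix.conjTranspose_conjTranspose]; simp only [mul_assoc]
          _ = ρCD := by rw [hK']; simp
      rw [eA, eC] at h
      exact h
  exact congrArg sSup e1
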